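/- Let n ≥ 2. There exists a powerful cover of the dihedral group DihedralGroup (2^n) of order 2^(n+1) consisting of exactly 2^(n-1) + 1 proper powerful subgroups; in fact, all of these subgroups may be taken abelian. -/

import Mathlib

open DihedralGroup

/-- A finite `p`-group `H` is *powerful* if, when `p` is odd, `[H,H]` is contained in the
subgroup generated by `p`-th powers, and when `p = 2`, `[H,H]` is contained in the subgroup
generated by fourth powers. -/
def IsPowerful (p : ℕ) (H : Type*) [Group H] : Prop :=
  commutator H ≤ Subgroup.closure {x : H | ∃ g : H, x = g ^ (if p = 2 then 4 else p)}

/-- The subgroup of rotations. -/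
def rotSub (N : ℕ) : Subgroup (DihedralGroup N) where
  carrier := {x | ∃ i, x = r i}
  mul_mem' := by rintro _ _ ⟨i, rfl⟩ ⟨j, rfl⟩; exact ⟨i + j, rfl⟩
  one_mem' := ⟨0, rfl⟩
  inv_mem' := by rintro _ ⟨i, rfl⟩; exact ⟨-i, rfl⟩

/-- A Klein four subgroup `{1, r m, sr j, sr (j+m)}` where `m + m = 0`. -/
def kleinSub (N : ℕ) (m j : ZMod N) (hm : m + m = 0) : Subgroup (DihedralGroup N) where
  carrier := {r 0, r m, sr j, sr (j + m)}
  mul_mem' := by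
    rintro x y hx hy
    simp only [Set.mem_insert_iff, Set.mem_singleton_iff] at *
    rcases hx with rfl | rfl | rfl | rfl <;> rcases hy with rfl | rfl | rfl | rfl <;>
      simp only [r_mul_r, r_mul_sr, sr_mul_r, sr_mul_sr, r.injEq, sr.injEq] <;>
      first
        | tauto
        | (left; linear_combination)
        | (left; linear_combination hm)
        | (left; linear_combination -hm)
        | (right; left; linear_combination)
        | (right; left; linear_combination hm)
        | (right; left; linear_combination -hm)
        | (right; right; left; linear_combination)
        | (right; right; left; linear_combination hm)
        | (right; right; left; linear_combination -hm)
        | (right; right; right; linear_combination)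
        | (right; right; right; linear_combination hm)
        | (right; right; right; linear_combination -hm)
  one_mem' := by left; rfl
  inv_mem' := by
    rintro x hx
    have hxx : x * x = 1 := by
      simp only [Set.mem_insert_iff, Set.mem_singleton_iff] at hx
      rcases hx with rfl | rfl | rfl | rfl <;>
        simp only [r_mul_r, sr_mul_sr, one_def, r.injEq] <;>
        first
          | tauto
          | linear_combination
          | linear_combination hm
    rw [inv_eq_of_mul_eq_one_right hxx]
    exact hx

theorem commutator_eq_bot_of_comm {H : Type*} [Group H] (h : ∀ x y : H, x * y = y * x) :
    commutator H = ⊥ := by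
  rw [commutator_def, Subgroup.commutator_eq_bot_iff_le_centralizer]
  intro x _ y _
  exact h y x


theorem r_mem_rotSub {N : ℕ} (i : ZMod N) : r i ∈ rotSub N := ⟨i, rfl⟩

theorem sr_not_mem_rotSub {N : ℕ} (i : ZMod N) : sr i ∉ rotSub N := by
  rintro ⟨j, h⟩
  exact absurd h (by simp)

theorem rotSub_comm {N : ℕ} : ∀ x ∈ rotSub N, ∀ y ∈ rotSub N, x * y = y * x := by
  rintro _ ⟨i, rfl⟩ _ ⟨j, rfl⟩
  simp [add_comm]

theorem mem_kleinSub_iff {N : ℕ} {m j : ZMod N} {hm : m + m = 0} {x : DihedralGroup N} :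
    x ∈ kleinSub N m j hm ↔ x = r 0 ∨ x = r m ∨ x = sr j ∨ x = sr (j + m) := by
  change x ∈ ({r 0, r m, sr j, sr (j + m)} : Set (DihedralGroup N)) ↔ _
  simp only [Set.mem_insert_iff, Set.mem_singleton_iff]

theorem kleinSub_comm {N : ℕ} (m j : ZMod N) (hm : m + m = 0) :
    ∀ x ∈ kleinSub N m j hm, ∀ y ∈ kleinSub N m j hm, x * y = y * x := by
  intro x hx y hy
  rw [mem_kleinSub_iff] at hx hy
  rcases hx with rfl | rfl | rfl | rfl <;> rcases hy with rfl | rfl | rfl | rfl <;>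
    simp only [r_mul_r, r_mul_sr, sr_mul_r, sr_mul_sr, r.injEq, sr.injEq] <;>
    first
      | rfl
      | linear_combination
      | linear_combination hm
      | linear_combination -hm
      | linear_combination 2 * hm
      | linear_combination -2 * hm

theorem isPowerful_of_comm {G : Type*} [Group G] (H : Subgroup G)
    (h : ∀ x ∈ H, ∀ y ∈ H, x * y = y * x) : IsPowerful 2 H := by
  unfold IsPowerful
  rw [commutator_eq_bot_of_comm fun x y => Subtype.ext (h x.1 x.2 y.1 y.2)]
  exact bot_le

theorem dihedral_exists_powerful_cover (n : ℕ) (hn : 2 ≤ n) :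
    ∃ S : Finset (Subgroup (DihedralGroup (2 ^ n))),
      S.card = 2 ^ (n - 1) + 1 ∧
      (∀ H ∈ S, H ≠ ⊤) ∧
      (∀ g : DihedralGroup (2 ^ n), ∃ H ∈ S, g ∈ H) ∧
      (∀ H ∈ S, IsPowerful 2 H) ∧
      (∀ H ∈ S, ∀ x ∈ H, ∀ y ∈ H, x * y = y * x) := by
  classical
  have hN : (0:ℕ) < 2 ^ n := by positivity
  haveI : NeZero (2 ^ n) := ⟨hN.ne'⟩
  set m : ℕ := 2 ^ (n - 1) with hmdef
  have hmm : m + m = 2 ^ n := by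
    have : n - 1 + 1 = n := by omega
    calc m + m = 2 ^ (n - 1) * 2 := by ring
    _ = 2 ^ n := by rw [← pow_succ, this]
  have hmlt : m < 2 ^ n := by omega
  set M : ZMod (2 ^ n) := (m : ZMod (2 ^ n)) with hMdef
  have hM : M + M = 0 := by
    rw [hMdef, ← Nat.cast_add, hmm, ZMod.natCast_self]
  have hMval : M.val = m := ZMod.val_cast_of_lt hmlt
  set K : Fin m → Subgroup (DihedralGroup (2 ^ n)) :=
    fun k => kleinSub (2 ^ n) M ((k : ℕ) : ZMod (2 ^ n)) hM with hK
  refine ⟨insert (rotSub (2 ^ n)) (Finset.univ.image K), ?_, ?_, ?_, ?_, ?_⟩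
  · have hinj : Function.Injective K := by
      intro k₁ k₂ h
      have h1 : sr ((k₁ : ℕ) : ZMod (2 ^ n)) ∈ K k₂ := by
        rw [← h, hK, mem_kleinSub_iff]; tauto
      rw [hK, mem_kleinSub_iff] at h1
      have hv1 : (((k₁ : ℕ) : ZMod (2 ^ n))).val = (k₁ : ℕ) :=
        ZMod.val_cast_of_lt (lt_trans k₁.isLt hmlt)
      rcases h1 with h1 | h1 | h1 | h1
      · exact absurd h1 (fun h => by cases h)
      · exact absurd h1 (by simp)
      · have := congrArg ZMod.val (sr.inj h1)
        rw [hv1, ZMod.val_cast_of_lt (lt_trans k₂.isLt hmlt)] at this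
        exact Fin.ext this
      · exfalso
        have h2 : ((k₂ : ℕ) : ZMod (2 ^ n)) + M = (((k₂ : ℕ) + m : ℕ) : ZMod (2 ^ n)) := by
          push_cast; rw [hMdef]
        have := congrArg ZMod.val (sr.inj h1)
        rw [hv1, h2, ZMod.val_cast_of_lt (by omega)] at this
        omega
    rw [Finset.card_insert_of_notMem, Finset.card_image_of_injective _ hinj,
      Finset.card_univ, Fintype.card_fin]
    intro hmem
    obtain ⟨k, _, hk⟩ := Finset.mem_image.mp hmem
    have : sr ((k : ℕ) : ZMod (2 ^ n)) ∈ rotSub (2 ^ n) := by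
      rw [← hk, hK, mem_kleinSub_iff]; tauto
    exact sr_not_mem_rotSub _ this
  · intro H hH
    rcases Finset.mem_insert.mp hH with rfl | hH
    · intro ht
      exact sr_not_mem_rotSub (0 : ZMod (2 ^ n)) (ht ▸ Subgroup.mem_top _)
    · obtain ⟨k, _, rfl⟩ := Finset.mem_image.mp hH
      intro ht
      have h1 : r 1 ∈ K k := ht ▸ Subgroup.mem_top _
      rw [hK, mem_kleinSub_iff] at h1
      have hv1 : (1 : ZMod (2 ^ n)).val = 1 := by
        have : ((1:ℕ) : ZMod (2 ^ n)).val = 1 := ZMod.val_cast_of_lt (by omega)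
        simpa using this
      rcases h1 with h1 | h1 | h1 | h1
      · have := congrArg ZMod.val (r.inj h1)
        rw [hv1, ZMod.val_zero] at this
        omega
      · have := congrArg ZMod.val (r.inj h1)
        rw [hv1, hMval] at this
        have : (2:ℕ) ≤ m := by
          have : 1 ≤ n - 1 := by omega
          calc (2:ℕ) = 2 ^ 1 := rfl
          _ ≤ 2 ^ (n - 1) := Nat.pow_le_pow_right (by omega) this
        omega
      · exact absurd h1 (by simp)
      · exact absurd h1 (by simp)
  · rintro (i | i)
    · exact ⟨rotSub (2 ^ n), Finset.mem_insert_self _ _, r_mem_rotSub i⟩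
    · have hival : i.val < 2 ^ n := ZMod.val_lt i
      by_cases hc : i.val < m
      · refine ⟨K ⟨i.val, hc⟩, Finset.mem_insert_of_mem
          (Finset.mem_image_of_mem _ (Finset.mem_univ _)), ?_⟩
        rw [hK, mem_kleinSub_iff]
        right; right; left
        congr 1
        simp [ZMod.natCast_val, ZMod.cast_id]
      · refine ⟨K ⟨i.val - m, by omega⟩, Finset.mem_insert_of_mem
          (Finset.mem_image_of_mem _ (Finset.mem_univ _)), ?_⟩
        rw [hK, mem_kleinSub_iff]
        right; right; right
        congr 1
        have : (((i.val - m : ℕ) : ZMod (2 ^ n))) + M = ((i.val - m + m : ℕ) : ZMod (2 ^ n)) := by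
          push_cast; rw [hMdef]
        rw [this]
        have h3 : i.val - m + m = i.val := by omega
        rw [h3, ZMod.natCast_val, ZMod.cast_id]
  · intro H hH
    rcases Finset.mem_insert.mp hH with rfl | hH
    · exact isPowerful_of_comm _ rotSub_comm
    · obtain ⟨k, _, rfl⟩ := Finset.mem_image.mp hH
      exact isPowerful_of_comm _ (kleinSub_comm _ _ _)
  · intro H hH
    rcases Finset.mem_insert.mp hH with rfl | hH
    · exact rotSub_comm
    · obtain ⟨k, _, rfl⟩ := Finset.mem_image.mp hH
      exact kleinSub_comm _ _ _
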